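/- Suppose v is an eigenvector of A with eigenvalue λ > 1, ⟨φ, v⟩ ≠ 0, and y* = (λ-1)v/⟨φ, v⟩ is the corresponding fixed point of M y = A y/(1 + ⟨φ, y⟩). If there is another eigenvalue μ of A with |μ| > λ, then y* is an unstable fixed point of M (i.e., not Lyapunov stable). -/

import Mathlib

open Matrix Filter

lemma iter_formula (A : Matrix (Fin 3) (Fin 3) ℝ) (φ : Fin 3 → ℝ)
    (M : (Fin 3 → ℝ) → (Fin 3 → ℝ))
    (hM : ∀ y, M y = (1 + φ ⬝ᵥ y)⁻¹ • A.mulVec y)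
    (z : ℕ → Fin 3 → ℝ) (c : ℕ → ℝ)
    (hz : ∀ k, A.mulVec (z k) = z (k+1))
    (hc : ∀ k, c (k+1) = c k + φ ⬝ᵥ z k) (hc0 : c 0 = 1) :
    ∀ k, (∀ j, j ≤ k → c j ≠ 0) → M^[k] (z 0) = (c k)⁻¹ • z k := by
  intro k
  induction k with
  | zero => intro _; simp [hc0]
  | succ n ih =>
    intro h
    rw [Function.iterate_succ_apply', ih (fun j hj => h j (le_trans hj (Nat.le_succ n))), hM]
    have hcn : c n ≠ 0 := h n (Nat.le_succ n)
    rw [mulVec_smul, hz, dotProduct_smul]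
    have h1 : 1 + (c n)⁻¹ • (φ ⬝ᵥ z n) = (c n)⁻¹ * c (n+1) := by
      rw [hc, smul_eq_mul]; field_simp
    rw [h1, smul_smul, mul_inv, inv_inv]
    congr 1
    have hcn1 : c (n+1) ≠ 0 := h (n+1) le_rfl
    field_simp

lemma iter_zero (A : Matrix (Fin 3) (Fin 3) ℝ) (φ : Fin 3 → ℝ)
    (M : (Fin 3 → ℝ) → (Fin 3 → ℝ))
    (hM : ∀ y, M y = (1 + φ ⬝ᵥ y)⁻¹ • A.mulVec y)
    (z : ℕ → Fin 3 → ℝ) (c : ℕ → ℝ)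
    (hz : ∀ k, A.mulVec (z k) = z (k+1))
    (hc : ∀ k, c (k+1) = c k + φ ⬝ᵥ z k) (hc0 : c 0 = 1)
    (m : ℕ) (hm : ∀ j, j ≤ m → c j ≠ 0) (hm1 : c (m+1) = 0) :
    M^[m+1] (z 0) = 0 := by
  rw [Function.iterate_succ_apply', iter_formula A φ M hM z c hz hc hc0 m hm, hM]
  have hcn : c m ≠ 0 := hm m le_rfl
  rw [dotProduct_smul]
  have h1 : 1 + (c m)⁻¹ • (φ ⬝ᵥ z m) = 0 := by
    have := hc m
    rw [hm1] at this
    have h2 : φ ⬝ᵥ z m = - c m := by linarith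
    rw [h2, smul_eq_mul]; field_simp; norm_num
  rw [h1]
  simp

/-- Suppose `v` is an eigenvector of a diagonalizable `3×3` real matrix `A`
with eigenvalue `λ > 1`, `⟨φ, v⟩ ≠ 0`, and `y* = (λ-1)v/⟨φ, v⟩` is the
corresponding fixed point of `M y = A y/(1 + ⟨φ, y⟩)`. If `A` has another
eigenvalue `μ` with `|μ| > λ`, then `y*` is not Lyapunov stable for the
discrete dynamical system obtained by iterating `M`. -/
theorem dominated_fixed_point_unstable
    (A : Matrix (Fin 3) (Fin 3) ℝ) (φ : Fin 3 → ℝ)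
    (M : (Fin 3 → ℝ) → (Fin 3 → ℝ))
    (hM : ∀ y, M y = (1 + φ ⬝ᵥ y)⁻¹ • A.mulVec y)
    (hdiag : ∃ b : Module.Basis (Fin 3) ℝ (Fin 3 → ℝ),
      ∀ i, ∃ μ : ℝ, A.mulVec (b i) = μ • b i)
    (v : Fin 3 → ℝ) (hv : v ≠ 0) (lam : ℝ) (hlam : 1 < lam)
    (heig : A.mulVec v = lam • v) (hφv : φ ⬝ᵥ v ≠ 0)
    (ystar : Fin 3 → ℝ) (hstar : ystar = ((lam - 1) / (φ ⬝ᵥ v)) • v)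
    (μ : ℝ) (hμ : ∃ w : Fin 3 → ℝ, w ≠ 0 ∧ A.mulVec w = μ • w)
    (hdom : lam < |μ|) :
    ¬ (∀ ε > 0, ∃ δ > 0, ∀ y : Fin 3 → ℝ,
        ‖y - ystar‖ < δ → ∀ k : ℕ, ‖M^[k] y - ystar‖ < ε) := by
  obtain ⟨w, hw0, hweig⟩ := hμ
  push_neg
  set α := φ ⬝ᵥ v with hα
  set β := φ ⬝ᵥ w with hβ
  set s := (lam - 1) / α with hs
  have hμabs : 1 < |μ| := lt_trans hlam hdom
  have hμ0 : μ ≠ 0 := by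
    intro h; rw [h] at hμabs; norm_num at hμabs
  have hμ1 : μ - 1 ≠ 0 := by
    intro h
    have : μ = 1 := by linarith
    rw [this] at hμabs; simp at hμabs
  have hlam0 : (0:ℝ) < lam := by linarith
  have hs0 : s ≠ 0 := div_ne_zero (by linarith) hφv
  have hys : ystar = s • v := hstar
  have hy0 : ystar ≠ 0 := by
    rw [hys]; exact smul_ne_zero hs0 hv
  have hμlam : μ ≠ lam := by
    intro h
    rw [h, abs_of_pos hlam0] at hdom
    exact lt_irrefl _ hdom
  set wst : Fin 3 → ℝ := ((μ - 1) / β) • w with hwst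
  have hwstne : wst ≠ ystar := by
    intro h
    have h1 : A.mulVec wst = μ • wst := by
      rw [hwst, mulVec_smul, hweig, smul_smul, smul_smul, mul_comm]
    have h2 : A.mulVec ystar = lam • ystar := by
      rw [hys, mulVec_smul, heig, smul_smul, smul_smul, mul_comm]
    rw [h] at h1
    have h3 : (μ - lam) • ystar = 0 := by
      rw [sub_smul, ← h1, ← h2, sub_self]
    rcases smul_eq_zero.mp h3 with h4 | h4
    · exact hμlam (by linarith [sub_eq_zero.mp h4])
    · exact hy0 h4
  have hnwst : 0 < ‖wst - ystar‖ := by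
    rw [norm_pos_iff]
    exact sub_ne_zero.mpr hwstne
  have hnys : 0 < ‖ystar‖ := norm_pos_iff.mpr hy0
  refine ⟨min ‖ystar‖ (‖wst - ystar‖ / 2), by positivity, ?_⟩
  intro δ hδ
  have hnw : 0 < ‖w‖ := norm_pos_iff.mpr hw0
  set t := δ / (2 * (‖w‖ + 1)) with ht
  have htpos : 0 < t := by positivity
  refine ⟨ystar + t • w, ?_, ?_⟩
  · rw [add_sub_cancel_left, norm_smul, Real.norm_eq_abs, abs_of_pos htpos]
    have h1 : t * ‖w‖ < t * (‖w‖ + 1) := by nlinarith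
    have h2 : t * (‖w‖ + 1) = δ / 2 := by
      rw [ht]; field_simp
    linarith [half_lt_self hδ]
  set z : ℕ → Fin 3 → ℝ := fun k => (lam^k * s) • v + (μ^k * t) • w with hzdef
  set c : ℕ → ℝ := fun k => lam^k + t * β * (μ^k - 1) / (μ - 1) with hcdef
  have hz0 : z 0 = ystar + t • w := by
    simp [hzdef, hys]
  have hc0 : c 0 = 1 := by simp [hcdef]
  have hz : ∀ k, A.mulVec (z k) = z (k+1) := by
    intro k
    simp only [hzdef, mulVec_add, mulVec_smul, heig, hweig, pow_succ]
    module
  have hsα : s * α = lam - 1 := by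
    rw [hs]; field_simp
  have hΦz : ∀ k, φ ⬝ᵥ z k = lam^k * (lam - 1) + μ^k * t * β := by
    intro k
    simp only [hzdef, dotProduct_add, dotProduct_smul, smul_eq_mul, ← hα, ← hβ]
    rw [mul_assoc, hsα]
  have hc : ∀ k, c (k+1) = c k + φ ⬝ᵥ z k := by
    intro k
    rw [hΦz]
    simp only [hcdef, pow_succ]
    field_simp
    ring
  by_cases hall : ∀ k, c k ≠ 0
  · by_cases hβ0 : β = 0
    · -- escape to infinity along w
      have hck : ∀ k, c k = lam^k := by
        intro k; simp [hcdef, hβ0]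
      have key : ∀ k, M^[k] (ystar + t • w) - ystar = ((μ/lam)^k * t) • w := by
        intro k
        rw [← hz0, iter_formula A φ M hM z c hz hc hc0 k (fun j _ => hall j), hys,
          hck, hzdef]
        have hlk : (lam:ℝ)^k ≠ 0 := pow_ne_zero _ (ne_of_gt hlam0)
        rw [smul_add, smul_smul, smul_smul, div_pow]
        rw [inv_mul_cancel_left₀ hlk]
        rw [show (lam^k)⁻¹ * (μ^k * t) = μ^k / lam^k * t by field_simp]
        exact add_sub_cancel_left _ _
      have hrat : 1 < |μ| / lam := (one_lt_div hlam0).mpr hdom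
      obtain ⟨k, hk⟩ := pow_unbounded_of_one_lt
        ((min ‖ystar‖ (‖wst - ystar‖ / 2)) / (t * ‖w‖)) hrat
      refine ⟨k, ?_⟩
      rw [key, norm_smul, Real.norm_eq_abs, abs_mul, abs_pow, abs_div,
        abs_of_pos hlam0, abs_of_pos htpos]
      rw [div_lt_iff₀ (by positivity)] at hk
      calc min ‖ystar‖ (‖wst - ystar‖ / 2) ≤ (|μ| / lam)^k * (t * ‖w‖) := le_of_lt hk
        _ = (|μ| / lam)^k * t * ‖w‖ := by ring
    · -- convergence to wst
      have hy : ∀ k, M^[k] (ystar + t • w) = (c k)⁻¹ • z k := by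
        intro k
        rw [← hz0, iter_formula A φ M hM z c hz hc hc0 k (fun j _ => hall j)]
      set L := t * β / (μ - 1) with hL
      have hLne : L ≠ 0 := div_ne_zero (mul_ne_zero (ne_of_gt htpos) hβ0) hμ1
      have habs1 : |lam * μ⁻¹| < 1 := by
        rw [abs_mul, abs_inv, abs_of_pos hlam0, ← div_eq_mul_inv]
        rw [div_lt_one (by linarith : (0:ℝ) < |μ|)]
        exact hdom
      have habs2 : |μ⁻¹| < 1 := by
        rw [abs_inv, inv_lt_one_iff₀]
        right; exact hμabs
      have h1 : Tendsto (fun k : ℕ => (lam * μ⁻¹)^k) atTop (nhds 0) :=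
        tendsto_pow_atTop_nhds_zero_of_abs_lt_one habs1
      have h2 : Tendsto (fun k : ℕ => (μ⁻¹)^k) atTop (nhds 0) :=
        tendsto_pow_atTop_nhds_zero_of_abs_lt_one habs2
      have hd : Tendsto (fun k => c k * (μ⁻¹)^k) atTop (nhds L) := by
        have heq : ∀ k, c k * (μ⁻¹)^k = (lam * μ⁻¹)^k + t * β / (μ - 1) * (1 - (μ⁻¹)^k) := by
          intro k
          have hμk : (μ:ℝ)^k ≠ 0 := pow_ne_zero _ hμ0
          simp only [hcdef, mul_pow, inv_pow]
          field_simp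
        have := h1.add ((tendsto_const_nhds (x := t * β / (μ - 1))).mul
          ((tendsto_const_nhds (x := (1:ℝ))).sub h2))
        simp only [sub_zero, mul_one, zero_add] at this
        exact Tendsto.congr (fun k => (heq k).symm) this
      have hu : Tendsto (fun k => (μ⁻¹)^k • z k) atTop (nhds (t • w)) := by
        have heq : ∀ k, (μ⁻¹)^k • z k = ((lam * μ⁻¹)^k * s) • v + t • w := by
          intro k
          have hμk : (μ:ℝ)^k ≠ 0 := pow_ne_zero _ hμ0
          simp only [hzdef, smul_add, smul_smul, mul_pow]
          congr 2
          · ring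
          · field_simp
            rw [div_pow, one_pow, one_div_mul_cancel hμk]
        have := ((h1.mul_const s).smul_const v).add
          (tendsto_const_nhds (x := t • w))
        simp only [zero_mul, zero_smul, zero_add] at this
        exact Tendsto.congr (fun k => (heq k).symm) this
      have hyy : ∀ k, (c k)⁻¹ • z k = (c k * (μ⁻¹)^k)⁻¹ • ((μ⁻¹)^k • z k) := by
        intro k
        have hμk : ((μ:ℝ)⁻¹)^k ≠ 0 := pow_ne_zero _ (inv_ne_zero hμ0)
        rw [smul_smul, mul_inv]
        congr 1
        rw [mul_assoc, inv_mul_cancel₀ hμk, mul_one]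
      have hlim : L⁻¹ • (t • w) = wst := by
        rw [smul_smul, hwst]
        congr 1
        rw [hL]
        field_simp
      have htend : Tendsto (fun k => M^[k] (ystar + t • w)) atTop (nhds wst) := by
        have := (hd.inv₀ hLne).smul hu
        rw [hlim] at this
        exact Tendsto.congr (fun k => by rw [hy k, hyy k]) this
      obtain ⟨N, hN⟩ := Metric.tendsto_atTop.mp htend (‖wst - ystar‖ / 2) (by positivity)
      refine ⟨N, ?_⟩
      have hdist := hN N le_rfl
      rw [dist_eq_norm] at hdist
      have htri := dist_triangle wst (M^[N] (ystar + t • w)) ystar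
      rw [dist_eq_norm, dist_eq_norm, dist_eq_norm, norm_sub_rev wst (M^[N] (ystar + t • w))] at htri
      calc min ‖ystar‖ (‖wst - ystar‖ / 2) ≤ ‖wst - ystar‖ / 2 := min_le_right _ _
        _ ≤ ‖M^[N] (ystar + t • w) - ystar‖ := by linarith
  · push_neg at hall
    have hex : ∃ k, c k = 0 := hall
    have hk0ne : Nat.find hex ≠ 0 := by
      intro h
      have := Nat.find_spec hex
      rw [h, hc0] at this
      exact one_ne_zero this
    obtain ⟨m, hm⟩ := Nat.exists_eq_succ_of_ne_zero hk0ne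
    have hmlt : ∀ j, j ≤ m → c j ≠ 0 := by
      intro j hj
      have hjlt : j < Nat.find hex := by rw [hm]; exact Nat.lt_succ_of_le hj
      exact Nat.find_min hex hjlt
    have hcm1 : c (m+1) = 0 := by
      have h5 := Nat.find_spec hex
      rw [hm] at h5
      exact h5
    have hzero := iter_zero A φ M hM z c hz hc hc0 m hmlt hcm1
    refine ⟨m+1, ?_⟩
    rw [← hz0, hzero, zero_sub, norm_neg]
    exact min_le_left _ _
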